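/- arXiv:2104.13350 — 4 statements merged into one kernel-verified Lean document; each statement's English description precedes it below -/
import Mathlib

section
/- Let λ, μ, θ, Δ be positive reals, set ρ := λ/μ and a := exp(−μΔ), and define f(x) := exp(−θx)/(exp(−θx) + exp(−θ(ρ − x))), F₀ := 1/(1 + exp(−θρ)) and F₁ := −2θ·exp(−θρ)/(1 + exp(−θρ))². Suppose L satisfies the nonlinear fixed-point equation ρ − L = L·a + ρ·f(L)·(1 − a) with 0 ≤ L ≤ ρ/2, and suppose L₁ satisfies the linearized fixed-point equation ρ − L₁ = L₁·a + ρ·(F₀ + F₁·L₁)·(1 − a). Then L₁ ≤ L, and consequently the first-order amplitude approximation dominates the true amplitude: ρ/2 − L₁ ≥ ρ/2 − L. -/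
open Real

private lemma sigma_hasDeriv (x : ℝ) :
    HasDerivAt (fun y : ℝ => (1 + Real.exp (-y))⁻¹)
      (Real.exp (-x) / (1 + Real.exp (-x)) ^ 2) x := by
  have h1 : HasDerivAt (fun y : ℝ => -y) (-1) x := (hasDerivAt_id x).neg
  have h2 : HasDerivAt (fun y : ℝ => Real.exp (-y)) (Real.exp (-x) * (-1)) x := h1.exp
  have h3 : HasDerivAt (fun y : ℝ => 1 + Real.exp (-y)) (Real.exp (-x) * (-1)) x :=
    h2.const_add 1
  have hne : (1 + Real.exp (-x)) ≠ 0 := by positivity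
  have := h3.inv hne
  exact this.congr_deriv (by ring)

private lemma tangent_ineq (s t : ℝ) (hs : 0 ≤ s) (hst : s ≤ t) :
    (1 + Real.exp (-s))⁻¹ ≤
      (1 + Real.exp (-t))⁻¹ + Real.exp (-t) / (1 + Real.exp (-t)) ^ 2 * (s - t) := by
  have ht0 : 0 ≤ t := hs.trans hst
  set c := Real.exp (-t) / (1 + Real.exp (-t)) ^ 2 with hc
  set ψ : ℝ → ℝ := fun x => (1 + Real.exp (-t))⁻¹ + c * (x - t) - (1 + Real.exp (-x))⁻¹ with hψ
  have hderiv : ∀ x : ℝ, HasDerivAt ψ (c - Real.exp (-x) / (1 + Real.exp (-x)) ^ 2) x := by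
    intro x
    have h1 : HasDerivAt (fun x : ℝ => (1 + Real.exp (-t))⁻¹ + c * (x - t)) c x := by
      have : HasDerivAt (fun x : ℝ => x - t) 1 x := (hasDerivAt_id x).sub_const t
      simpa using ((this.const_mul c).const_add ((1 + Real.exp (-t))⁻¹))
    exact h1.sub (sigma_hasDeriv x)
  have hanti : AntitoneOn ψ (Set.Icc 0 t) := by
    apply antitoneOn_of_deriv_nonpos (convex_Icc 0 t)
    · exact Continuous.continuousOn
        (Differentiable.continuous fun x => (hderiv x).differentiableAt)
    · intro x hx
      exact ((hderiv x).differentiableAt).differentiableWithinAt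
    · intro x hx
      rw [(hderiv x).deriv]
      rw [interior_Icc] at hx
      obtain ⟨hx0, hxt⟩ := hx
      set u := Real.exp (-x) with hu
      set v := Real.exp (-t) with hv
      have hv0 : 0 < v := Real.exp_pos _
      have hu0 : 0 < u := Real.exp_pos _
      have hu1 : u ≤ 1 := Real.exp_le_one_iff.mpr (by linarith)
      have hv1 : v ≤ 1 := Real.exp_le_one_iff.mpr (by linarith)
      have hvu : v ≤ u := Real.exp_le_exp.mpr (by linarith)
      have h1u : (0:ℝ) < (1 + u) ^ 2 := by positivity
      have h1v : (0:ℝ) < (1 + v) ^ 2 := by positivity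
      rw [hc, sub_nonpos, div_le_div_iff₀ h1v h1u]
      nlinarith [mul_nonneg (sub_nonneg.2 hvu)
        (sub_nonneg.2 (mul_le_one₀ hu1 hv0.le hv1))]
  have h0 : ψ t = 0 := by simp [hψ]
  have := hanti ⟨hs, hst⟩ ⟨ht0, le_refl t⟩ hst
  rw [h0] at this
  simp only [hψ] at this
  linarith

set_option maxHeartbeats 800000 in
/-- Theorem 2.5: the first-order Taylor approximation of the amplitude is an upper
bound for the actual amplitude, i.e. L₁ ≤ L and hence ρ/2 − L₁ ≥ ρ/2 − L. -/
theorem linear_approximation_upper_bound (lam μ θ Δ : ℝ)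
    (hlam : 0 < lam) (hμ : 0 < μ) (hθ : 0 < θ) (hΔ : 0 < Δ)
    (ρ a F₀ F₁ L L₁ : ℝ)
    (hρ : ρ = lam / μ) (ha : a = Real.exp (-μ * Δ))
    (hF₀ : F₀ = 1 / (1 + Real.exp (-θ * ρ)))
    (hF₁ : F₁ = -2 * θ * Real.exp (-θ * ρ) / (1 + Real.exp (-θ * ρ)) ^ 2)
    (hL : ρ - L = L * a +
      ρ * (Real.exp (-θ * L) / (Real.exp (-θ * L) + Real.exp (-θ * (ρ - L)))) * (1 - a))
    (hL0 : 0 ≤ L) (hLhalf : L ≤ ρ / 2)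
    (hL₁ : ρ - L₁ = L₁ * a + ρ * (F₀ + F₁ * L₁) * (1 - a)) :
    L₁ ≤ L ∧ ρ / 2 - L ≤ ρ / 2 - L₁ := by
  have hρpos : 0 < ρ := by rw [hρ]; positivity
  have ha0 : 0 < a := by rw [ha]; exact Real.exp_pos _
  have ha1 : a < 1 := by
    rw [ha]; exact Real.exp_lt_one_iff.mpr (by nlinarith)
  -- rewrite f(L) as logistic
  have hfL : Real.exp (-θ * L) / (Real.exp (-θ * L) + Real.exp (-θ * (ρ - L)))
      = (1 + Real.exp (-(θ * (ρ - 2 * L))))⁻¹ := by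
    have hsplit : Real.exp (-θ * (ρ - L)) =
        Real.exp (-θ * L) * Real.exp (-(θ * (ρ - 2 * L))) := by
      rw [← Real.exp_add]; ring_nf
    rw [hsplit]
    have h1 : Real.exp (-θ * L) > 0 := Real.exp_pos _
    have h2 : Real.exp (-(θ * (ρ - 2 * L))) > 0 := Real.exp_pos _
    field_simp
  -- tangent inequality
  have hs0 : 0 ≤ θ * (ρ - 2 * L) := by nlinarith
  have hst : θ * (ρ - 2 * L) ≤ θ * ρ := by nlinarith
  have htan := tangent_ineq (θ * (ρ - 2 * L)) (θ * ρ) hs0 hst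
  have hFρ : (-θ * ρ) = -(θ * ρ) := by ring
  have hkey : Real.exp (-θ * L) / (Real.exp (-θ * L) + Real.exp (-θ * (ρ - L)))
      ≤ F₀ + F₁ * L := by
    rw [hfL, hF₀, hF₁, hFρ, one_div]
    calc (1 + Real.exp (-(θ * (ρ - 2 * L))))⁻¹
        ≤ (1 + Real.exp (-(θ * ρ)))⁻¹ +
          Real.exp (-(θ * ρ)) / (1 + Real.exp (-(θ * ρ))) ^ 2 *
            (θ * (ρ - 2 * L) - θ * ρ) := htan
      _ = (1 + Real.exp (-(θ * ρ)))⁻¹ +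
          -2 * θ * Real.exp (-(θ * ρ)) / (1 + Real.exp (-(θ * ρ))) ^ 2 * L := by ring
  -- slope positivity : 1 + a + ρ(1-a)F₁ > 0
  have hTpos : 0 < θ * ρ := by positivity
  have hTe : (θ * ρ) * Real.exp (-(θ * ρ)) ≤ Real.exp (-1) := by
    have h1 : θ * ρ ≤ Real.exp (θ * ρ - 1) := by
      linarith [Real.add_one_le_exp (θ * ρ - 1)]
    have h2 : Real.exp (θ * ρ - 1) * Real.exp (-(θ * ρ)) = Real.exp (-1) := by
      rw [← Real.exp_add]; ring_nf
    nlinarith [Real.exp_pos (-(θ * ρ))]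
  have hexpm1 : Real.exp (-1) < 1/2 := by
    have h2 : (2:ℝ) < Real.exp 1 := lt_trans (by norm_num) Real.exp_one_gt_d9
    have h3 : Real.exp (-1) * Real.exp 1 = 1 := by rw [← Real.exp_add]; norm_num
    nlinarith [Real.exp_pos (-(1:ℝ))]
  have hF₁neg : F₁ < 0 := by
    rw [hF₁, hFρ]
    have := Real.exp_pos (-(θ * ρ))
    apply div_neg_of_neg_of_pos
    · nlinarith
    · positivity
  have hF₁bound : ρ * (-F₁) ≤ 2 * Real.exp (-1) := by
    rw [hF₁, hFρ]
    have he : 0 < Real.exp (-(θ * ρ)) := Real.exp_pos _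
    have hd : (1:ℝ) ≤ (1 + Real.exp (-(θ * ρ))) ^ 2 := by nlinarith
    have heq : ρ * -(-2 * θ * Real.exp (-(θ * ρ)) / (1 + Real.exp (-(θ * ρ))) ^ 2)
        = 2 * ((θ * ρ) * Real.exp (-(θ * ρ))) / (1 + Real.exp (-(θ * ρ))) ^ 2 := by
      ring
    rw [heq]
    have h1 : 2 * ((θ * ρ) * Real.exp (-(θ * ρ))) / (1 + Real.exp (-(θ * ρ))) ^ 2
        ≤ 2 * ((θ * ρ) * Real.exp (-(θ * ρ))) := div_le_self (by positivity) hd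
    linarith
  have hρF : 0 ≤ ρ * (-F₁) := mul_nonneg hρpos.le (by linarith)
  have hslope : 0 < 1 + a + ρ * (1 - a) * F₁ := by
    have h1 : ρ * (1 - a) * (-F₁) ≤ ρ * (-F₁) := by nlinarith
    nlinarith
  -- combine
  have heq : (L₁ - L) * (1 + a + ρ * (1 - a) * F₁)
      = ρ * (1 - a) *
        (Real.exp (-θ * L) / (Real.exp (-θ * L) + Real.exp (-θ * (ρ - L))) - (F₀ + F₁ * L)) := by
    linear_combination hL - hL₁
  have hnp : ρ * (1 - a) *
      (Real.exp (-θ * L) / (Real.exp (-θ * L) + Real.exp (-θ * (ρ - L))) - (F₀ + F₁ * L)) ≤ 0 :=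
    mul_nonpos_of_nonneg_of_nonpos (mul_nonneg hρpos.le (by linarith))
      (sub_nonpos.2 hkey)
  have hmain : (L₁ - L) * (1 + a + ρ * (1 - a) * F₁) ≤ 0 := by linarith [heq, hnp]
  have hLL : L₁ ≤ L := by
    by_contra h
    push_neg at h
    have h1 : 0 < (L₁ - L) * (1 + a + ρ * (1 - a) * F₁) := mul_pos (by linarith) hslope
    linarith
  exact ⟨hLL, by linarith⟩
end

section
/- Let m ≥ 1 be a natural number and set N := 2m. Let λ, μ, θ, Δ be positive reals, ρ := λ/μ, a := exp(−μΔ), and let L, U be real numbers. Define the symmetric configuration (Lᵢ, Uᵢ) for i = 1, …, N by (Lᵢ, Uᵢ) := (L, U) for i ≤ m and (Lᵢ, Uᵢ) := (U, L) for i > m. Then the configuration satisfies the N-dimensional steady-state system Uᵢ = Lᵢ·a + ρ·(exp(−θLᵢ)/∑_{j=1}^{N} exp(−θLⱼ))·(1 − a) and Lᵢ = Uᵢ·a + ρ·(exp(−θUᵢ)/∑_{j=1}^{N} exp(−θUⱼ))·(1 − a) for all i, if and only if (L, U) satisfies the two-dimensional steady-state system with scaled arrival rate ρ* := 2ρ/N,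 namely U = L·a + ρ*·(exp(−θL)/(exp(−θL) + exp(−θU)))·(1 − a) and L = U·a + ρ*·(exp(−θU)/(exp(−θU) + exp(−θL)))·(1 − a). -/
open Real

lemma sum_ite_fin (m : ℕ) (A B : ℝ) :
    (∑ j : Fin (2 * m), (if (j : ℕ) < m then A else B)) = m * A + m * B := by
  rw [Fin.sum_univ_eq_sum_range (fun j => if j < m then A else B) (2 * m)]
  rw [Finset.range_eq_Ico, ← Finset.sum_Ico_consecutive _ (Nat.zero_le m) (by omega)]
  rw [Finset.sum_congr rfl (fun x hx => if_pos (Finset.mem_Ico.mp hx).2),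
      Finset.sum_congr rfl (g := fun _ => B)
        (fun x hx => if_neg (by have := (Finset.mem_Ico.mp hx).1; omega))]
  rw [Finset.sum_const, Finset.sum_const, Nat.card_Ico, Nat.card_Ico]
  have h2m : 2 * m - m = m := by omega
  rw [h2m, Nat.sub_zero, nsmul_eq_mul, nsmul_eq_mul]

/-- Even-N reduction (Section 3.1): for N = 2m, the symmetric configuration built
from (L, U) solves the N-dimensional steady-state system if and only if (L, U)
solves the two-dimensional system with scaled arrival rate ρ* = 2ρ/N. -/
theorem even_case_reduction (m : ℕ) (hm : 1 ≤ m) (lam μ θ Δ : ℝ)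
    (hlam : 0 < lam) (hμ : 0 < μ) (hθ : 0 < θ) (hΔ : 0 < Δ)
    (L U : ℝ) (Lv Uv : Fin (2 * m) → ℝ)
    (hLv : ∀ i : Fin (2 * m), Lv i = if (i : ℕ) < m then L else U)
    (hUv : ∀ i : Fin (2 * m), Uv i = if (i : ℕ) < m then U else L) :
    ((∀ i, Uv i = Lv i * Real.exp (-μ * Δ) +
        (lam / μ) * (Real.exp (-θ * Lv i) / ∑ j, Real.exp (-θ * Lv j)) *
          (1 - Real.exp (-μ * Δ))) ∧
     (∀ i, Lv i = Uv i * Real.exp (-μ * Δ) +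
        (lam / μ) * (Real.exp (-θ * Uv i) / ∑ j, Real.exp (-θ * Uv j)) *
          (1 - Real.exp (-μ * Δ)))) ↔
    (U = L * Real.exp (-μ * Δ) +
        (2 * (lam / μ) / (2 * m : ℕ)) *
          (Real.exp (-θ * L) / (Real.exp (-θ * L) + Real.exp (-θ * U))) *
          (1 - Real.exp (-μ * Δ)) ∧
     L = U * Real.exp (-μ * Δ) +
        (2 * (lam / μ) / (2 * m : ℕ)) *
          (Real.exp (-θ * U) / (Real.exp (-θ * U) + Real.exp (-θ * L))) *
          (1 - Real.exp (-μ * Δ))) := by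
  have hm0 : (0:ℝ) < m := by exact_mod_cast hm
  have hsumL : (∑ j, Real.exp (-θ * Lv j)) = m * Real.exp (-θ * L) + m * Real.exp (-θ * U) := by
    have : ∀ j : Fin (2 * m), Real.exp (-θ * Lv j)
        = if (j : ℕ) < m then Real.exp (-θ * L) else Real.exp (-θ * U) := by
      intro j; rw [hLv j]; split <;> rfl
    rw [Finset.sum_congr rfl (fun j _ => this j), sum_ite_fin]
  have hsumU : (∑ j, Real.exp (-θ * Uv j)) = m * Real.exp (-θ * U) + m * Real.exp (-θ * L) := by
    have : ∀ j : Fin (2 * m), Real.exp (-θ * Uv j)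
        = if (j : ℕ) < m then Real.exp (-θ * U) else Real.exp (-θ * L) := by
      intro j; rw [hUv j]; split <;> rfl
    rw [Finset.sum_congr rfl (fun j _ => this j), sum_ite_fin]
  have hexp : 0 < Real.exp (-θ * L) + Real.exp (-θ * U) :=
    add_pos (Real.exp_pos _) (Real.exp_pos _)
  have key1 : (2 * (lam / μ) / (2 * m : ℕ)) *
        (Real.exp (-θ * L) / (Real.exp (-θ * L) + Real.exp (-θ * U)))
      = (lam / μ) * (Real.exp (-θ * L) / (m * Real.exp (-θ * L) + m * Real.exp (-θ * U))) := by
    push_cast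
    field_simp
  have key2 : (2 * (lam / μ) / (2 * m : ℕ)) *
        (Real.exp (-θ * U) / (Real.exp (-θ * U) + Real.exp (-θ * L)))
      = (lam / μ) * (Real.exp (-θ * U) / (m * Real.exp (-θ * U) + m * Real.exp (-θ * L))) := by
    push_cast
    field_simp
  constructor
  · rintro ⟨h1, h2⟩
    have hlt : (0:ℕ) < 2 * m := by omega
    have hi0 : ((⟨0, hlt⟩ : Fin (2 * m)) : ℕ) < m := hm
    constructor
    · have := h1 ⟨0, hlt⟩
      rw [hLv ⟨0, hlt⟩, hUv ⟨0, hlt⟩, if_pos hi0, if_pos hi0, hsumL] at this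
      rw [key1]
      exact this
    · have := h2 ⟨0, hlt⟩
      rw [hLv ⟨0, hlt⟩, hUv ⟨0, hlt⟩, if_pos hi0, if_pos hi0, hsumU] at this
      rw [key2]
      exact this
  · rintro ⟨h1, h2⟩
    constructor
    · intro i
      rw [hLv i, hUv i, hsumL]
      by_cases hi : (i : ℕ) < m
      · rw [if_pos hi, if_pos hi, ← key1]; exact h1
      · rw [if_neg hi, if_neg hi]
        rw [key2, add_comm (m * Real.exp (-θ * U))] at h2
        exact h2
    · intro i
      rw [hLv i, hUv i, hsumU]
      by_cases hi : (i : ℕ) < m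
      · rw [if_pos hi, if_pos hi, ← key2]; exact h2
      · rw [if_neg hi, if_neg hi]
        rw [key1, add_comm (m * Real.exp (-θ * L))] at h1
        exact h1
end

section
/- Let N ≥ 3 be an odd natural number, let λ, μ, θ, Δ be positive reals, set ρ := λ/μ and a := exp(−μΔ). Suppose the real numbers U₁, L₁, U₂, L₂ satisfy the four steady-state equations U₁ = L₁·a + ρ·exp(−θL₁)/(((N+1)/2)·exp(−θL₁) + ((N−1)/2)·exp(−θU₂))·(1 − a), L₁ = U₁·a + ρ·exp(−θU₁)/(((N+1)/2)·exp(−θU₁) + ((N−1)/2)·exp(−θL₂))·(1 − a), U₂ = L₂·a + ρ·exp(−θL₂)/(((N−1)/2)·exp(−θL₂) + ((N+1)/2)·exp(−θU₁))·(1 − a), and L₂ = U₂·a + ρ·exp(−θU₂)/(((N−1)/2)·exp(−θU₂) + ((N+1)/2)·exp(−θL₁))·(1 − a). Then ((N+1)/2)·U₁ + ((N−1)/2)·L₂ = ρ and ((N+1)/2)·L₁ + ((N−1)/2)·U₂ = ρ. -/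
open Real

/-- Odd-N case: the four steady-state equations (3.3)–(3.6) imply the two linear
constraints (3.7)–(3.8). -/
theorem odd_case_linear_constraints (N : ℕ) (hN : 3 ≤ N) (hodd : Odd N)
    (lam μ θ Δ : ℝ) (hlam : 0 < lam) (hμ : 0 < μ) (hθ : 0 < θ) (hΔ : 0 < Δ)
    (U₁ L₁ U₂ L₂ : ℝ)
    (h1 : U₁ = L₁ * Real.exp (-μ * Δ) +
      (lam / μ) * Real.exp (-θ * L₁) /
        (((N : ℝ) + 1) / 2 * Real.exp (-θ * L₁) + ((N : ℝ) - 1) / 2 * Real.exp (-θ * U₂)) *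
        (1 - Real.exp (-μ * Δ)))
    (h2 : L₁ = U₁ * Real.exp (-μ * Δ) +
      (lam / μ) * Real.exp (-θ * U₁) /
        (((N : ℝ) + 1) / 2 * Real.exp (-θ * U₁) + ((N : ℝ) - 1) / 2 * Real.exp (-θ * L₂)) *
        (1 - Real.exp (-μ * Δ)))
    (h3 : U₂ = L₂ * Real.exp (-μ * Δ) +
      (lam / μ) * Real.exp (-θ * L₂) /
        (((N : ℝ) - 1) / 2 * Real.exp (-θ * L₂) + ((N : ℝ) + 1) / 2 * Real.exp (-θ * U₁)) *
        (1 - Real.exp (-μ * Δ)))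
    (h4 : L₂ = U₂ * Real.exp (-μ * Δ) +
      (lam / μ) * Real.exp (-θ * U₂) /
        (((N : ℝ) - 1) / 2 * Real.exp (-θ * U₂) + ((N : ℝ) + 1) / 2 * Real.exp (-θ * L₁)) *
        (1 - Real.exp (-μ * Δ))) :
    ((N : ℝ) + 1) / 2 * U₁ + ((N : ℝ) - 1) / 2 * L₂ = lam / μ ∧
    ((N : ℝ) + 1) / 2 * L₁ + ((N : ℝ) - 1) / 2 * U₂ = lam / μ := by

  have hN3 : (3:ℝ) ≤ (N:ℝ) := by exact_mod_cast hN
  set a : ℝ := Real.exp (-μ * Δ) with ha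
  have ha0 : 0 < a := Real.exp_pos _
  have ha1 : a < 1 := by
    rw [ha, Real.exp_lt_one_iff]
    nlinarith
  set p : ℝ := ((N : ℝ) + 1) / 2 with hp
  set q : ℝ := ((N : ℝ) - 1) / 2 with hq
  have hp0 : 0 < p := by rw [hp]; linarith
  have hq0 : 0 < q := by rw [hq]; linarith
  have hD1 : p * Real.exp (-θ * L₁) + q * Real.exp (-θ * U₂) ≠ 0 := by
    positivity
  have hD1' : q * Real.exp (-θ * U₂) + p * Real.exp (-θ * L₁) ≠ 0 := by
    positivity
  have hD2 : p * Real.exp (-θ * U₁) + q * Real.exp (-θ * L₂) ≠ 0 := by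
    positivity
  have hD2' : q * Real.exp (-θ * L₂) + p * Real.exp (-θ * U₁) ≠ 0 := by
    positivity
  have hμ' : (μ:ℝ) ≠ 0 := ne_of_gt hμ
  have e1 : p * U₁ + q * L₂ = (p * L₁ + q * U₂) * a + (lam / μ) * (1 - a) := by
    rw [h1, h4]
    field_simp
    ring
  have e2 : p * L₁ + q * U₂ = (p * U₁ + q * L₂) * a + (lam / μ) * (1 - a) := by
    rw [h2, h3]
    field_simp
    ring
  have hsum : (p * U₁ + q * L₂ - (p * L₁ + q * U₂)) * (1 + a) = 0 := by
    linear_combination e1 - e2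
  have hXY : p * U₁ + q * L₂ = p * L₁ + q * U₂ := by
    rcases mul_eq_zero.mp hsum with h | h
    · linarith
    · linarith
  have h1a : 1 - a ≠ 0 := by linarith
  constructor
  · have hc : (p * U₁ + q * L₂) * (1 - a) = (lam / μ) * (1 - a) := by
      linear_combination e1 - a * hXY
    exact mul_right_cancel₀ h1a hc
  · have hc : (p * L₁ + q * U₂) * (1 - a) = (lam / μ) * (1 - a) := by
      linear_combination e2 + a * hXY
    exact mul_right_cancel₀ h1a hc
end

section
/- Let N ≥ 3 be an odd natural number, let λ, μ, θ, Δ be positive reals, set ρ := λ/μ and a := exp(−μΔ). Suppose U₁, L₁, U₂, L₂ satisfy the four steady-state equations U₁ = L₁·a + ρ·exp(−θL₁)/(((N+1)/2)·exp(−θL₁) + ((N−1)/2)·exp(−θU₂))·(1 − a), L₁ = U₁·a + ρ·exp(−θU₁)/(((N+1)/2)·exp(−θU₁) + ((N−1)/2)·exp(−θL₂))·(1 − a), U₂ = L₂·a + ρ·exp(−θL₂)/(((N−1)/2)·exp(−θL₂) + ((N+1)/2)·exp(−θU₁))·(1 − a), and L₂ = U₂·a + ρ·exp(−θU₂)/(((N−1)/2)·exp(−θU₂)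 + ((N+1)/2)·exp(−θL₁))·(1 − a). Then U₁ and L₁ satisfy the reduced two-equation system U₁ = L₁·a + ρ·exp(−θL₁)/(((N+1)/2)·exp(−θL₁) + ((N−1)/2)·exp(−2ρθ/(N−1))·exp(θ·((N+1)/(N−1))·L₁))·(1 − a) and L₁ = U₁·a + ρ·exp(−θU₁)/(((N+1)/2)·exp(−θU₁) + ((N−1)/2)·exp(−2ρθ/(N−1))·exp(θ·((N+1)/(N−1))·U₁))·(1 − a). -/
open Real

set_option maxHeartbeats 800000

/-- Odd-N case: the four steady-state equations (3.3)–(3.6) imply the reduced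
two-equation system (3.11)–(3.12) in U₁ and L₁. -/
theorem odd_case_reduced_system (N : ℕ) (hN : 3 ≤ N) (hodd : Odd N)
    (lam μ θ Δ : ℝ) (hlam : 0 < lam) (hμ : 0 < μ) (hθ : 0 < θ) (hΔ : 0 < Δ)
    (U₁ L₁ U₂ L₂ : ℝ)
    (h1 : U₁ = L₁ * Real.exp (-μ * Δ) +
      (lam / μ) * Real.exp (-θ * L₁) /
        (((N : ℝ) + 1) / 2 * Real.exp (-θ * L₁) + ((N : ℝ) - 1) / 2 * Real.exp (-θ * U₂)) *
        (1 - Real.exp (-μ * Δ)))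
    (h2 : L₁ = U₁ * Real.exp (-μ * Δ) +
      (lam / μ) * Real.exp (-θ * U₁) /
        (((N : ℝ) + 1) / 2 * Real.exp (-θ * U₁) + ((N : ℝ) - 1) / 2 * Real.exp (-θ * L₂)) *
        (1 - Real.exp (-μ * Δ)))
    (h3 : U₂ = L₂ * Real.exp (-μ * Δ) +
      (lam / μ) * Real.exp (-θ * L₂) /
        (((N : ℝ) - 1) / 2 * Real.exp (-θ * L₂) + ((N : ℝ) + 1) / 2 * Real.exp (-θ * U₁)) *
        (1 - Real.exp (-μ * Δ)))
    (h4 : L₂ = U₂ * Real.exp (-μ * Δ) +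
      (lam / μ) * Real.exp (-θ * U₂) /
        (((N : ℝ) - 1) / 2 * Real.exp (-θ * U₂) + ((N : ℝ) + 1) / 2 * Real.exp (-θ * L₁)) *
        (1 - Real.exp (-μ * Δ))) :
    (U₁ = L₁ * Real.exp (-μ * Δ) +
      (lam / μ) * Real.exp (-θ * L₁) /
        (((N : ℝ) + 1) / 2 * Real.exp (-θ * L₁) +
          ((N : ℝ) - 1) / 2 * Real.exp (-2 * (lam / μ) * θ / ((N : ℝ) - 1)) *
            Real.exp (θ * (((N : ℝ) + 1) / ((N : ℝ) - 1)) * L₁)) *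
        (1 - Real.exp (-μ * Δ))) ∧
    (L₁ = U₁ * Real.exp (-μ * Δ) +
      (lam / μ) * Real.exp (-θ * U₁) /
        (((N : ℝ) + 1) / 2 * Real.exp (-θ * U₁) +
          ((N : ℝ) - 1) / 2 * Real.exp (-2 * (lam / μ) * θ / ((N : ℝ) - 1)) *
            Real.exp (θ * (((N : ℝ) + 1) / ((N : ℝ) - 1)) * U₁)) *
        (1 - Real.exp (-μ * Δ))) := by
  have hn : (3 : ℝ) ≤ (N : ℝ) := by exact_mod_cast hN
  have ha0 : 0 < Real.exp (-μ * Δ) := Real.exp_pos _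
  have ha1 : Real.exp (-μ * Δ) < 1 := by
    have : -μ * Δ < 0 := by nlinarith
    simpa using Real.exp_lt_one_iff.mpr this
  have hρ0 : 0 < lam / μ := div_pos hlam hμ
  have hNm' : ((N : ℝ) - 1) ≠ 0 := by linarith
  have hNp : (0 : ℝ) < ((N : ℝ) + 1) / 2 := by linarith
  have hNm : (0 : ℝ) < ((N : ℝ) - 1) / 2 := by linarith
  have hD1 : ((N : ℝ) + 1) / 2 * Real.exp (-θ * L₁) + ((N : ℝ) - 1) / 2 * Real.exp (-θ * U₂) ≠ 0 :=
    ne_of_gt (add_pos (mul_pos hNp (Real.exp_pos _)) (mul_pos hNm (Real.exp_pos _)))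
  have hD2 : ((N : ℝ) + 1) / 2 * Real.exp (-θ * U₁) + ((N : ℝ) - 1) / 2 * Real.exp (-θ * L₂) ≠ 0 :=
    ne_of_gt (add_pos (mul_pos hNp (Real.exp_pos _)) (mul_pos hNm (Real.exp_pos _)))
  -- align the denominators of h3, h4 with those of h2, h1
  rw [show ((N : ℝ) - 1) / 2 * Real.exp (-θ * U₂) + ((N : ℝ) + 1) / 2 * Real.exp (-θ * L₁)
      = ((N : ℝ) + 1) / 2 * Real.exp (-θ * L₁) + ((N : ℝ) - 1) / 2 * Real.exp (-θ * U₂) from by ring] at h4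
  rw [show ((N : ℝ) - 1) / 2 * Real.exp (-θ * L₂) + ((N : ℝ) + 1) / 2 * Real.exp (-θ * U₁)
      = ((N : ℝ) + 1) / 2 * Real.exp (-θ * U₁) + ((N : ℝ) - 1) / 2 * Real.exp (-θ * L₂) from by ring] at h3
  -- make the denominators atomic
  set d₁ := ((N : ℝ) + 1) / 2 * Real.exp (-θ * L₁) + ((N : ℝ) - 1) / 2 * Real.exp (-θ * U₂) with hd1def
  set d₂ := ((N : ℝ) + 1) / 2 * Real.exp (-θ * U₁) + ((N : ℝ) - 1) / 2 * Real.exp (-θ * L₂) with hd2def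
  clear_value d₁ d₂
  -- linear constraints
  have hX : ((N : ℝ) + 1) / 2 * U₁ + ((N : ℝ) - 1) / 2 * L₂ =
      (((N : ℝ) + 1) / 2 * L₁ + ((N : ℝ) - 1) / 2 * U₂) * Real.exp (-μ * Δ) +
        (lam / μ) * (1 - Real.exp (-μ * Δ)) := by
    rw [h1, h4]
    field_simp [hD1]
    rw [hd1def]; ring
  have hY : ((N : ℝ) + 1) / 2 * L₁ + ((N : ℝ) - 1) / 2 * U₂ =
      (((N : ℝ) + 1) / 2 * U₁ + ((N : ℝ) - 1) / 2 * L₂) * Real.exp (-μ * Δ) +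
        (lam / μ) * (1 - Real.exp (-μ * Δ)) := by
    rw [h2, h3]
    field_simp [hD2]
    rw [hd2def]; ring
  set X := ((N : ℝ) + 1) / 2 * U₁ + ((N : ℝ) - 1) / 2 * L₂ with hXdef
  set Y := ((N : ℝ) + 1) / 2 * L₁ + ((N : ℝ) - 1) / 2 * U₂ with hYdef
  clear_value X Y
  have hXY : X = Y := by
    have h : (X - Y) * (1 + Real.exp (-μ * Δ)) = 0 := by linear_combination hX - hY
    rcases mul_eq_zero.mp h with h' | h'
    · linarith
    · linarith
  have hXρ : X = lam / μ := by
    have h : (X - lam / μ) * (1 - Real.exp (-μ * Δ)) = 0 := by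
      linear_combination hX - Real.exp (-μ * Δ) * hXY
    rcases mul_eq_zero.mp h with h' | h'
    · linarith
    · linarith
  have hYρ : Y = lam / μ := hXY ▸ hXρ
  rw [hXdef] at hXρ
  rw [hYdef] at hYρ
  have hlm : μ * (lam / μ) = lam := by field_simp
  have hU2 : μ * (((N : ℝ) - 1) * U₂) = 2 * lam - μ * (((N : ℝ) + 1) * L₁) := by
    linear_combination 2 * μ * hYρ + 2 * hlm
  have hL2 : μ * (((N : ℝ) - 1) * L₂) = 2 * lam - μ * (((N : ℝ) + 1) * U₁) := by
    linear_combination 2 * μ * hXρ + 2 * hlm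
  have hexpU₂ : Real.exp (-2 * (lam / μ) * θ / ((N : ℝ) - 1)) *
      Real.exp (θ * (((N : ℝ) + 1) / ((N : ℝ) - 1)) * L₁) = Real.exp (-θ * U₂) := by
    rw [← Real.exp_add]
    congr 1
    field_simp [hNm', hμ.ne']
    linear_combination hU2
  have hexpL₂ : Real.exp (-2 * (lam / μ) * θ / ((N : ℝ) - 1)) *
      Real.exp (θ * (((N : ℝ) + 1) / ((N : ℝ) - 1)) * U₁) = Real.exp (-θ * L₂) := by
    rw [← Real.exp_add]
    congr 1
    field_simp [hNm', hμ.ne']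
    linear_combination hL2
  constructor
  · rw [show ((N : ℝ) - 1) / 2 * Real.exp (-2 * (lam / μ) * θ / ((N : ℝ) - 1)) *
        Real.exp (θ * (((N : ℝ) + 1) / ((N : ℝ) - 1)) * L₁)
        = ((N : ℝ) - 1) / 2 * Real.exp (-θ * U₂) from by rw [mul_assoc, hexpU₂]]
    rw [← hd1def]
    exact h1
  · rw [show ((N : ℝ) - 1) / 2 * Real.exp (-2 * (lam / μ) * θ / ((N : ℝ) - 1)) *
        Real.exp (θ * (((N : ℝ) + 1) / ((N : ℝ) - 1)) * U₁)
        = ((N : ℝ) - 1) / 2 * Real.exp (-θ * L₂) from by rw [mul_assoc, hexpL₂]]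
    rw [← hd2def]
    exact h2
end
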